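/- Let m ≥ 2 and σ ≥ d/2 − 2/(m−1) with σ < d/2 − 2/m. Then there exists C > 0 depending only on d such that for every k_m ∈ ℤ^d, Σ over (k₁,…,k_{m−1}) ∈ (ℤ_I^d)^{m−1} with |k_j| ≤ |k_m| for all j of ∏_{j=1}^{m−1} ⟨k_j⟩^{−2(σ+2/m)} ⟨k_m⟩^{−4/m} ≤ C^{m−1} (d − 2(σ+2/m))^{−(m−1)} ⟨k_m⟩^{(m−1)(d−2σ_c)−4}, where σ_c = d/2 − 2/(m−1); in particular this quantity is bounded by C^{m−1}|d − 2(σ+2/m)|^{−(m−1)} since (m−1)(d−2σ_c) − 4 ≤ 0. -/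

import Mathlib

noncomputable section

open Finset Real
open scoped Classical

abbrev Vd (d : ℕ) := EuclideanSpace ℝ (Fin d)

def toV {d : ℕ} (k : Fin d → ℤ) : Vd d :=
  (WithLp.equiv 2 (Fin d → ℝ)).symm fun i => (k i : ℝ)

/-- ℓ¹ norm of a lattice point. -/
def l1Z {d : ℕ} (k : Fin d → ℤ) : ℝ := ∑ i, |(k i : ℝ)|

/-- Japanese bracket ⟨k⟩. -/
def japZ {d : ℕ} (k : Fin d → ℤ) : ℝ := Real.sqrt (1 + ‖toV k‖ ^ 2)

/-- The region of summation: tuples (k₁,…,k_{m−1}) of lattice points in the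
first octant with |k_j| ≤ |k_m| for all j. -/
def region (d n : ℕ) (km : Fin d → ℤ) : Set (Fin n → Fin d → ℤ) :=
  {kk | (∀ j i, 0 ≤ kk j i) ∧ ∀ j, l1Z (kk j) ≤ l1Z km}

lemma norm_toV_sq {d : ℕ} (k : Fin d → ℤ) : ‖toV k‖ ^ 2 = ∑ i, ((k i : ℝ)) ^ 2 := by
  rw [toV, EuclideanSpace.norm_eq]
  rw [Real.sq_sqrt (by positivity)]
  simp [sq_abs]

lemma japZ_sq {d : ℕ} (k : Fin d → ℤ) : japZ k ^ 2 = 1 + ∑ i, ((k i : ℝ)) ^ 2 := by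
  rw [japZ, Real.sq_sqrt (by positivity), norm_toV_sq]

lemma one_le_japZ {d : ℕ} (k : Fin d → ℤ) : 1 ≤ japZ k := by
  have h := Real.sq_sqrt (show (0:ℝ) ≤ 1 + ‖toV k‖ ^ 2 by positivity)
  have h2 := Real.sqrt_nonneg (1 + ‖toV k‖ ^ 2)
  rw [japZ]
  nlinarith [sq_nonneg ‖toV k‖]

lemma japZ_pos {d : ℕ} (k : Fin d → ℤ) : 0 < japZ k := lt_of_lt_of_le one_pos (one_le_japZ k)

lemma le_of_sq_le_sq' {a b : ℝ} (hb : 0 ≤ b) (h : a ^ 2 ≤ b ^ 2) (ha : 0 ≤ a) : a ≤ b := by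
  nlinarith

lemma l1Z_nonneg {d : ℕ} (k : Fin d → ℤ) : 0 ≤ l1Z k :=
  Finset.sum_nonneg fun i _ => abs_nonneg _

/-- Cauchy–Schwarz: `l1Z km ≤ √d * japZ km`. -/
lemma l1Z_le {d : ℕ} (km : Fin d → ℤ) : l1Z km ≤ Real.sqrt d * japZ km := by
  have h1 : (l1Z km) ^ 2 ≤ (d : ℝ) * ∑ i, ((km i : ℝ)) ^ 2 := by
    have := sq_sum_le_card_mul_sum_sq (s := Finset.univ) (f := fun i => |(km i : ℝ)|)
    simpa [l1Z, sq_abs] using this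
  refine le_of_sq_le_sq' (mul_nonneg (Real.sqrt_nonneg _) (japZ_pos km).le) ?_ (l1Z_nonneg km)
  · rw [mul_pow, Real.sq_sqrt (by positivity), japZ_sq]
    nlinarith [Finset.sum_nonneg (fun i (_ : i ∈ Finset.univ) => sq_nonneg ((km i : ℝ)))]

/-- upper bound on a shell -/
lemma japZ_le_shell {d : ℕ} {k : Fin d → ℤ} (hk : ∀ i, 0 ≤ k i) {n : ℕ}
    (hsum : ∑ i, k i = (n : ℤ)) : japZ k ≤ (n : ℝ) + 1 := by
  refine le_of_sq_le_sq' (by positivity) ?_ (japZ_pos k).le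
  rw [japZ_sq]
  have h1 : ∑ i, ((k i : ℝ)) ^ 2 ≤ (∑ i, ((k i : ℝ))) ^ 2 :=
    sum_sq_le_sq_sum_of_nonneg (fun i _ => by exact_mod_cast hk i)
  have h2 : (∑ i, ((k i : ℝ))) = (n : ℝ) := by exact_mod_cast congrArg (Int.cast : ℤ → ℝ) hsum
  nlinarith

/-- lower bound on a shell -/
lemma shell_le_japZ {d : ℕ} (hd : 1 ≤ d) {k : Fin d → ℤ} (hk : ∀ i, 0 ≤ k i) {n : ℕ}
    (hsum : ∑ i, k i = (n : ℤ)) : (n : ℝ) + 1 ≤ Real.sqrt (2 * d) * japZ k := by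
  refine le_of_sq_le_sq' (mul_nonneg (Real.sqrt_nonneg _) (japZ_pos k).le) ?_ (by positivity)
  rw [mul_pow, Real.sq_sqrt (by positivity), japZ_sq]
  have h1 : ((n:ℝ)) ^ 2 ≤ (d : ℝ) * ∑ i, ((k i : ℝ)) ^ 2 := by
    have := sq_sum_le_card_mul_sum_sq (s := Finset.univ) (f := fun i => ((k i : ℝ)))
    have h2 : (∑ i, ((k i : ℝ))) = (n : ℝ) := by exact_mod_cast congrArg (Int.cast : ℤ → ℝ) hsum
    simpa [h2] using this
  have hd' : (1:ℝ) ≤ (d:ℝ) := by exact_mod_cast hd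
  nlinarith [Finset.sum_nonneg (fun i (_ : i ∈ Finset.univ) => sq_nonneg ((k i : ℝ))),
    sq_nonneg ((n:ℝ) - 1), (by positivity : (0:ℝ) ≤ (n:ℝ))]

/-- shell cardinality bound -/
lemma card_shell_le {d' : ℕ} (n : ℕ) (s : Finset (Fin (d' + 1) → ℤ))
    (hs : ∀ k ∈ s, (∀ i, 0 ≤ k i) ∧ ∑ i, k i = (n : ℤ)) : s.card ≤ (n + 1) ^ d' := by
  have key := Finset.card_le_card_of_injOn
      (fun (k : Fin (d'+1) → ℤ) (i : Fin d') => k i.castSucc)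
      (t := Fintype.piFinset fun _ : Fin d' => Finset.Icc (0:ℤ) (n:ℤ)) ?_ ?_ (s := s)
  · calc s.card ≤ _ := key
      _ ≤ (n+1)^d' := by
        rw [Fintype.card_piFinset]
        simp [Int.card_Icc]
  · intro k hk
    obtain ⟨hk0, hksum⟩ := hs k hk
    rw [Finset.mem_coe, Fintype.mem_piFinset]
    intro i
    rw [Finset.mem_Icc]
    refine ⟨hk0 _, ?_⟩
    calc k i.castSucc ≤ ∑ j, k j :=
          Finset.single_le_sum (fun j _ => hk0 j) (Finset.mem_univ _)
      _ = (n : ℤ) := hksum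
  · intro k hk k' hk' h
    obtain ⟨hk0, hksum⟩ := hs k hk
    obtain ⟨hk0', hksum'⟩ := hs k' hk'
    funext i
    refine Fin.lastCases ?_ ?_ i
    · have h1 := Fin.sum_univ_castSucc (f := k)
      have h2 := Fin.sum_univ_castSucc (f := k')
      have h3 : ∑ i : Fin d', k i.castSucc = ∑ i : Fin d', k' i.castSucc := by
        refine Finset.sum_congr rfl fun i _ => ?_
        exact congrFun h i
      rw [hksum] at h1; rw [hksum'] at h2
      omega
    · intro i
      exact congrFun h i

/-- 1D dyadic-type sum bound. -/
lemma sum_pow_le {β : ℝ} (hβ0 : 0 < β) (hβ2 : β ≤ 2) (M : ℕ) :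
    ∑ n ∈ Finset.range (M + 1), ((n : ℝ) + 1) ^ (β - 1) ≤ 2 / β * ((M : ℝ) + 1) ^ β := by
  induction M with
  | zero =>
    simp only [Finset.range_one, Finset.sum_singleton, Nat.cast_zero, zero_add,
      Real.one_rpow]
    rw [div_mul_eq_mul_div, le_div_iff₀ hβ0]
    linarith
  | succ M ih =>
    rw [Finset.sum_range_succ]
    set a : ℝ := (M : ℝ) + 1 with ha
    have ha1 : (1:ℝ) ≤ a := le_add_of_nonneg_left (Nat.cast_nonneg M)
    have ha0 : (0:ℝ) < a := by linarith
    have hcast : ((M + 1 : ℕ) : ℝ) = a := by push_cast [ha]; ring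
    have key : β * (a + 1) ^ (β - 1) ≤ 2 * ((a + 1) ^ β - a ^ β) := by
      rcases le_or_gt β 1 with hβ1 | hβ1
      · -- a ^ β ≤ (a+1)^β - β (a+1)^(β-1)
        have hber : (1 + (-(1/(a+1)))) ^ β ≤ 1 + β * (-(1/(a+1))) := by
          refine rpow_one_add_le_one_add_mul_self ?_ hβ0.le hβ1
          have : 1/(a+1) ≤ 1 := by
            rw [div_le_one (by linarith)]; linarith
          linarith
        have hval : (1 : ℝ) + -(1/(a+1)) = a/(a+1) := by
          field_simp
          ring
        rw [hval] at hber
        have hmul : (a/(a+1)) ^ β * (a+1) ^ β ≤ (1 + β * (-(1/(a+1)))) * (a+1) ^ β := by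
          refine mul_le_mul_of_nonneg_right hber ?_
          positivity
        rw [← Real.mul_rpow (by positivity) (by positivity)] at hmul
        have hval2 : a/(a+1) * (a+1) = a := by field_simp
        rw [hval2] at hmul
        have hpow : (a+1) ^ β / (a+1) = (a+1) ^ (β - 1) := by
          rw [Real.rpow_sub (by linarith), Real.rpow_one]
        have : a ^ β ≤ (a+1) ^ β - β * (a+1) ^ (β-1) := by
          calc a ^ β ≤ (1 + β * (-(1/(a+1)))) * (a+1) ^ β := hmul
            _ = (a+1) ^ β - β * ((a+1) ^ β / (a+1)) := by ring
            _ = (a+1) ^ β - β * (a+1) ^ (β-1) := by rw [hpow]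
        nlinarith [Real.rpow_nonneg (by positivity : (0:ℝ) ≤ a + 1) (β - 1)]
      · -- (a+1)^β - a^β ≥ β a^(β-1), and (a+1)^(β-1) ≤ 2 a^(β-1)
        have hber : 1 + β * (1/a) ≤ (1 + 1/a) ^ β := by
          refine one_add_mul_self_le_rpow_one_add ?_ hβ1.le
          have : (0:ℝ) ≤ 1/a := by positivity
          linarith
        have hmul : (1 + β * (1/a)) * a ^ β ≤ (1 + 1/a) ^ β * a ^ β := by
          refine mul_le_mul_of_nonneg_right hber (by positivity)
        rw [← Real.mul_rpow (by positivity) (by positivity)] at hmul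
        have hval : (1 + 1/a) * a = a + 1 := by field_simp
        rw [hval] at hmul
        have hpow : a ^ β / a = a ^ (β - 1) := by
          rw [Real.rpow_sub ha0, Real.rpow_one]
        have h1 : a ^ β + β * a ^ (β - 1) ≤ (a+1) ^ β := by
          calc a ^ β + β * a ^ (β-1) = (1 + β * (1/a)) * a ^ β := by
                rw [← hpow]; ring
            _ ≤ (a+1) ^ β := hmul
        have h2 : (a + 1) ^ (β - 1) ≤ 2 * a ^ (β - 1) := by
          calc (a+1) ^ (β-1) ≤ (2*a) ^ (β-1) := by
                refine Real.rpow_le_rpow (by linarith) (by linarith) (by linarith)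
            _ = 2 ^ (β-1) * a ^ (β-1) := Real.mul_rpow (by norm_num) ha0.le
            _ ≤ 2 * a ^ (β-1) := by
                refine mul_le_mul_of_nonneg_right ?_ (by positivity)
                calc (2:ℝ) ^ (β-1) ≤ 2 ^ (1:ℝ) :=
                      Real.rpow_le_rpow_of_exponent_le (by norm_num) (by linarith)
                  _ = 2 := Real.rpow_one 2
        nlinarith
    rw [hcast]
    have : 2 / β * a ^ β + (a + 1) ^ (β - 1) ≤ 2 / β * (a + 1) ^ β := by
      rw [div_mul_eq_mul_div, div_mul_eq_mul_div, ← sub_nonneg]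
      have h3 : (2 * (a+1)^β) / β - (2 * a ^ β / β + (a+1)^(β-1))
          = (2 * ((a+1)^β - a^β) - β * (a+1)^(β-1)) / β := by
        field_simp
        ring
      rw [h3]
      exact div_nonneg (by linarith) hβ0.le
    calc ∑ n ∈ Finset.range (M+1), ((n:ℝ)+1) ^ (β-1) + (a + 1) ^ (β - 1)
        ≤ 2/β * a ^ β + (a+1)^(β-1) := by linarith
      _ ≤ 2/β * (a+1) ^ β := this

lemma single_sum {d : ℕ} (hd : 1 ≤ d) {α β : ℝ} (hβ : β = (d:ℝ) - 2*α) (hβ0 : 0 < β)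
    (hβ2 : β ≤ 2) (km : Fin d → ℤ) (s : Finset (Fin d → ℤ))
    (hs : ∀ k ∈ s, (∀ i, 0 ≤ k i) ∧ l1Z k ≤ l1Z km) :
    ∑ k ∈ s, japZ k ^ (-(2*α)) ≤
      8 * (d:ℝ) * (2*(d:ℝ))^d / β * japZ km ^ β := by
  obtain ⟨d', rfl⟩ : ∃ d', d = d' + 1 := ⟨d - 1, (Nat.succ_pred_eq_of_pos hd).symm⟩
  have hdR : (1:ℝ) ≤ ((d'+1:ℕ):ℝ) := by exact_mod_cast hd
  set K : ℝ := (2*((d'+1:ℕ):ℝ))^(d'+1) with hK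
  have hK1 : (1:ℝ) ≤ K := one_le_pow₀ (by linarith)
  set N : ℕ := ∑ i, (km i).natAbs with hN
  have hl1km : l1Z km = (N : ℝ) := by
    rw [l1Z, hN]
    push_cast [Nat.cast_natAbs]
    rfl
  set g : (Fin (d'+1) → ℤ) → ℕ := fun k => (∑ i, k i).toNat with hg
  have hsum_int : ∀ k ∈ s, (0:ℤ) ≤ ∑ i, k i ∧ ∑ i, k i ≤ (N:ℤ) := by
    intro k hk
    obtain ⟨hk0, hkl⟩ := hs k hk
    have hpos : (0:ℤ) ≤ ∑ i, k i := Finset.sum_nonneg fun i _ => hk0 i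
    refine ⟨hpos, ?_⟩
    have hl1 : l1Z k = ((∑ i, k i : ℤ) : ℝ) := by
      rw [l1Z]
      push_cast
      exact Finset.sum_congr rfl fun i _ => abs_of_nonneg (by exact_mod_cast hk0 i)
    rw [hl1, hl1km] at hkl
    exact_mod_cast hkl
  have hmaps : ∀ k ∈ s, g k ∈ Finset.range (N+1) := by
    intro k hk
    obtain ⟨h1, h2⟩ := hsum_int k hk
    simp only [hg, Finset.mem_range]
    omega
  rw [← Finset.sum_fiberwise_of_maps_to hmaps]
  have fiber_bound : ∀ n ∈ Finset.range (N+1),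
      ∑ k ∈ s.filter (fun k => g k = n), japZ k ^ (-(2*α)) ≤
        K * ((n:ℝ)+1) ^ (β - 1) := by
    intro n _
    have hfib : ∀ k ∈ s.filter (fun k => g k = n),
        (∀ i, 0 ≤ k i) ∧ ∑ i, k i = (n:ℤ) := by
      intro k hk
      rw [Finset.mem_filter] at hk
      obtain ⟨hks, hkg⟩ := hk
      obtain ⟨h1, _⟩ := hsum_int k hks
      exact ⟨(hs k hks).1, by simp only [hg] at hkg; omega⟩
    have hpt : ∀ k ∈ s.filter (fun k => g k = n),
        japZ k ^ (-(2*α)) ≤ K * ((n:ℝ)+1) ^ (-(2*α)) := by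
      intro k hk
      obtain ⟨hk0, hksum⟩ := hfib k hk
      have hJ1 : japZ k ≤ (n:ℝ) + 1 := japZ_le_shell hk0 hksum
      have hJ2 : (n:ℝ) + 1 ≤ Real.sqrt (2*(d'+1:ℕ)) * japZ k := shell_le_japZ hd hk0 hksum
      rcases le_or_gt 0 α with hα | hα
      · have h1 : japZ k ^ (-(2*α)) ≤ (((n:ℝ)+1)/Real.sqrt (2*((d'+1:ℕ):ℝ))) ^ (-(2*α)) := by
          refine Real.rpow_le_rpow_of_nonpos (by positivity) ?_ (by linarith)
          rw [div_le_iff₀ (by positivity), mul_comm]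
          exact hJ2
        have h2 : (((n:ℝ)+1)/Real.sqrt (2*((d'+1:ℕ):ℝ))) ^ (-(2*α)) =
            ((n:ℝ)+1) ^ (-(2*α)) * (Real.sqrt (2*((d'+1:ℕ):ℝ))) ^ (2*α) := by
          rw [Real.div_rpow (by positivity) (Real.sqrt_nonneg _), div_eq_mul_inv,
            ← Real.rpow_neg (Real.sqrt_nonneg _), neg_neg]
        have h3 : (Real.sqrt (2*((d'+1:ℕ):ℝ))) ^ (2*α) = (2*((d'+1:ℕ):ℝ)) ^ α := by
          rw [Real.sqrt_eq_rpow, ← Real.rpow_mul (by positivity)]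
          congr 1
          ring
        have h4 : (2*((d'+1:ℕ):ℝ)) ^ α ≤ K := by
          rw [hK, ← Real.rpow_natCast (2*((d'+1:ℕ):ℝ)) (d'+1)]
          exact Real.rpow_le_rpow_of_exponent_le (by linarith)
            (by push_cast at hβ ⊢; linarith)
        calc japZ k ^ (-(2*α)) ≤ (((n:ℝ)+1)/Real.sqrt (2*((d'+1:ℕ):ℝ))) ^ (-(2*α)) := h1
          _ = ((n:ℝ)+1) ^ (-(2*α)) * (Real.sqrt (2*((d'+1:ℕ):ℝ))) ^ (2*α) := h2
          _ = ((n:ℝ)+1) ^ (-(2*α)) * (2*((d'+1:ℕ):ℝ)) ^ α := by rw [h3]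
          _ ≤ ((n:ℝ)+1) ^ (-(2*α)) * K := by
              exact mul_le_mul_of_nonneg_left h4 (by positivity)
          _ = K * ((n:ℝ)+1) ^ (-(2*α)) := by ring
      · have h1 : japZ k ^ (-(2*α)) ≤ ((n:ℝ)+1) ^ (-(2*α)) :=
          Real.rpow_le_rpow (japZ_pos k).le hJ1 (by linarith)
        calc japZ k ^ (-(2*α)) ≤ ((n:ℝ)+1) ^ (-(2*α)) := h1
          _ ≤ K * ((n:ℝ)+1) ^ (-(2*α)) := le_mul_of_one_le_left (by positivity) hK1
    have hcard : (s.filter (fun k => g k = n)).card ≤ (n+1)^d' :=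
      card_shell_le n _ hfib
    calc ∑ k ∈ s.filter (fun k => g k = n), japZ k ^ (-(2*α))
        ≤ (s.filter (fun k => g k = n)).card • (K * ((n:ℝ)+1) ^ (-(2*α))) :=
          Finset.sum_le_card_nsmul _ _ _ hpt
      _ = ((s.filter (fun k => g k = n)).card : ℝ) * (K * ((n:ℝ)+1) ^ (-(2*α))) := by
          rw [nsmul_eq_mul]
      _ ≤ ((n+1:ℕ)^d' : ℝ) * (K * ((n:ℝ)+1) ^ (-(2*α))) := by
          refine mul_le_mul_of_nonneg_right ?_ (by positivity)
          exact_mod_cast hcard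
      _ = K * (((n:ℝ)+1)^(d':ℕ) * ((n:ℝ)+1) ^ (-(2*α))) := by push_cast; ring
      _ = K * ((n:ℝ)+1) ^ (β - 1) := by
          rw [← Real.rpow_natCast ((n:ℝ)+1) d', ← Real.rpow_add (by positivity)]
          have he : (d':ℝ) + -(2*α) = β - 1 := by push_cast at hβ; linarith
          rw [he]
  calc ∑ n ∈ Finset.range (N+1), ∑ k ∈ s.filter (fun k => g k = n), japZ k ^ (-(2*α))
      ≤ ∑ n ∈ Finset.range (N+1), K * ((n:ℝ)+1) ^ (β - 1) :=
        Finset.sum_le_sum fiber_bound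
    _ = K * ∑ n ∈ Finset.range (N+1), ((n:ℝ)+1) ^ (β - 1) := by rw [Finset.mul_sum]
    _ ≤ K * (2 / β * ((N:ℝ)+1) ^ β) := by
        refine mul_le_mul_of_nonneg_left (sum_pow_le hβ0 hβ2 N) (by positivity)
    _ ≤ K * (2 / β * (4*((d'+1:ℕ):ℝ) * japZ km ^ β)) := by
        refine mul_le_mul_of_nonneg_left (mul_le_mul_of_nonneg_left ?_ (by positivity))
          (by positivity)
        have hs1 : (1:ℝ) ≤ Real.sqrt ((d'+1:ℕ):ℝ) := by
          rw [show (1:ℝ) = Real.sqrt 1 by rw [Real.sqrt_one]]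
          exact Real.sqrt_le_sqrt hdR
        have hs2 := one_le_japZ km
        have hNle : (N:ℝ) + 1 ≤ 2 * Real.sqrt ((d'+1:ℕ):ℝ) * japZ km := by
          have := l1Z_le km
          rw [hl1km] at this
          nlinarith
        calc ((N:ℝ)+1) ^ β ≤ (2 * Real.sqrt ((d'+1:ℕ):ℝ) * japZ km) ^ β :=
              Real.rpow_le_rpow (by positivity) hNle hβ0.le
          _ = (2 * Real.sqrt ((d'+1:ℕ):ℝ)) ^ β * japZ km ^ β :=
              Real.mul_rpow (by positivity) (japZ_pos km).le
          _ ≤ (2 * Real.sqrt ((d'+1:ℕ):ℝ)) ^ (2:ℝ) * japZ km ^ β := by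
              refine mul_le_mul_of_nonneg_right
                (Real.rpow_le_rpow_of_exponent_le (by nlinarith) hβ2) (by positivity)
          _ = 4*((d'+1:ℕ):ℝ) * japZ km ^ β := by
              rw [show (2:ℝ) = ((2:ℕ):ℝ) by norm_num, Real.rpow_natCast]
              rw [mul_pow, Real.sq_sqrt (by linarith)]
              ring
    _ = 8 * ((d'+1:ℕ):ℝ) * K / β * japZ km ^ β := by
        field_simp
        ring

/-- the key counting bound in the subcritical range
d/2 − 2/(m−1) ≤ σ < d/2 − 2/m:
Σ_{(k₁,…,k_{m−1}) ∈ (ℤ_I^d)^{m−1}, |k_j| ≤ |k_m|} ∏_j ⟨k_j⟩^{−2(σ+2/m)} ⟨k_m⟩^{−4/m}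
≤ C^{m−1} (d − 2(σ+2/m))^{−(m−1)} ⟨k_m⟩^{(m−1)(d−2σ_c)−4}, where
σ_c = d/2 − 2/(m−1); in particular it is ≤ C^{m−1}|d − 2(σ+2/m)|^{−(m−1)}. -/
theorem stmt8 (d : ℕ) (hd : 1 ≤ d) :
    ∃ C : ℝ, 0 < C ∧ ∀ (m : ℕ), 2 ≤ m → ∀ σ : ℝ,
      (d : ℝ)/2 - 2/((m : ℝ) - 1) ≤ σ → σ < (d : ℝ)/2 - 2/(m : ℝ) →
      ∀ km : Fin d → ℤ,
        (∑' kk : Fin (m-1) → Fin d → ℤ,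
            (region d (m-1) km).indicator
              (fun kk => (∏ j, japZ (kk j) ^ (-(2 * (σ + 2/(m : ℝ))))) *
                japZ km ^ (-(4/(m : ℝ)))) kk) ≤
          C ^ (m - 1) * ((d : ℝ) - 2 * (σ + 2/(m : ℝ))) ^ (-((m : ℝ) - 1)) *
            japZ km ^ (((m : ℝ) - 1) * ((d : ℝ) - 2 * ((d : ℝ)/2 - 2/((m : ℝ) - 1))) - 4) ∧
        (∑' kk : Fin (m-1) → Fin d → ℤ,
            (region d (m-1) km).indicator
              (fun kk => (∏ j, japZ (kk j) ^ (-(2 * (σ + 2/(m : ℝ))))) *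
                japZ km ^ (-(4/(m : ℝ)))) kk) ≤
          C ^ (m - 1) * |(d : ℝ) - 2 * (σ + 2/(m : ℝ))| ^ (-((m : ℝ) - 1)) := by
  have hd0 : (0:ℝ) < (d:ℝ) := by exact_mod_cast hd
  refine ⟨8 * (d:ℝ) * (2*(d:ℝ))^d, by positivity, ?_⟩
  intro m hm σ hσ1 hσ2 km
  set C : ℝ := 8 * (d:ℝ) * (2*(d:ℝ))^d with hC
  have hm2 : (2:ℝ) ≤ (m:ℝ) := by exact_mod_cast hm
  have hm1pos : (0:ℝ) < (m:ℝ) - 1 := by linarith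
  have hmpos : (0:ℝ) < (m:ℝ) := by linarith
  set α : ℝ := σ + 2/(m:ℝ) with hα
  set β : ℝ := (d:ℝ) - 2*α with hβdef
  set nn : ℕ := m - 1 with hnn
  have hncast : ((nn : ℕ) : ℝ) = (m:ℝ) - 1 := by
    rw [hnn]
    have h1 : 1 ≤ m := by omega
    push_cast [h1]
    ring
  have h24 : (4:ℝ)/(m:ℝ) = 2*(2/(m:ℝ)) := by ring
  have h24' : (4:ℝ)/((m:ℝ)-1) = 2*(2/((m:ℝ)-1)) := by ring
  have he1 : β = (d:ℝ) - 2*σ - 4/(m:ℝ) := by rw [hβdef, hα]; ring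
  have hβ0 : 0 < β := by rw [he1]; linarith
  have hβle : β ≤ 4/((m:ℝ)*((m:ℝ)-1)) := by
    have h1 : β ≤ 4/((m:ℝ)-1) - 4/(m:ℝ) := by rw [he1]; linarith
    have h3 : 4/((m:ℝ)-1) - 4/(m:ℝ) = 4/((m:ℝ)*((m:ℝ)-1)) := by
      field_simp
      ring
    linarith
  have hprodpos : (0:ℝ) < (m:ℝ)*((m:ℝ)-1) := by positivity
  have hprod2 : (2:ℝ) ≤ (m:ℝ)*((m:ℝ)-1) := by nlinarith
  have hβ2 : β ≤ 2 := by
    have h1 : 4/((m:ℝ)*((m:ℝ)-1)) ≤ 2 := by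
      rw [div_le_iff₀ hprodpos]; nlinarith
    linarith
  have hnβ : ((m:ℝ)-1)*β ≤ 4/(m:ℝ) := by
    have h1 := mul_le_mul_of_nonneg_left hβle hm1pos.le
    have h2 : ((m:ℝ)-1)*(4/((m:ℝ)*((m:ℝ)-1))) = 4/(m:ℝ) := by
      field_simp
    linarith
  -- finite support setup
  set N : ℕ := ∑ i, (km i).natAbs with hN
  have hl1km : l1Z km = (N:ℝ) := by
    rw [l1Z, hN]
    push_cast [Nat.cast_natAbs]
    rfl
  have hcomp : ∀ k : Fin d → ℤ, (∀ i, 0 ≤ k i) → l1Z k ≤ l1Z km →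
      ∀ i, k i ∈ Finset.Icc (0:ℤ) (N:ℤ) := by
    intro k h0 hl i
    rw [Finset.mem_Icc]
    refine ⟨h0 i, ?_⟩
    have hsum : k i ≤ ∑ j, k j := Finset.single_le_sum (fun j _ => h0 j) (Finset.mem_univ i)
    have hl1 : l1Z k = ((∑ j, k j : ℤ) : ℝ) := by
      rw [l1Z]
      push_cast
      exact Finset.sum_congr rfl fun j _ => abs_of_nonneg (by exact_mod_cast h0 j)
    rw [hl1, hl1km] at hl
    have : (∑ j, k j) ≤ (N:ℤ) := by exact_mod_cast hl
    omega
  set Afin : Finset (Fin d → ℤ) :=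
    (Fintype.piFinset fun _ : Fin d => Finset.Icc (0:ℤ) (N:ℤ)).filter
      (fun k => (∀ i, 0 ≤ k i) ∧ l1Z k ≤ l1Z km) with hAfin
  set BigS : Finset (Fin nn → Fin d → ℤ) :=
    (Fintype.piFinset fun _ : Fin nn =>
      (Fintype.piFinset fun _ : Fin d => Finset.Icc (0:ℤ) (N:ℤ))).filter
      (fun kk => kk ∈ region d nn km) with hBigS
  have hFnn : ∀ kk : Fin nn → Fin d → ℤ,
      0 ≤ (∏ j, japZ (kk j) ^ (-(2 * α))) * japZ km ^ (-(4/(m:ℝ))) := by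
    intro kk
    refine mul_nonneg (Finset.prod_nonneg fun j _ => ?_) ?_ <;>
      exact Real.rpow_nonneg (japZ_pos _).le _
  have hvanish : ∀ kk : Fin nn → Fin d → ℤ, kk ∉ BigS →
      (region d nn km).indicator
        (fun kk => (∏ j, japZ (kk j) ^ (-(2 * α))) * japZ km ^ (-(4/(m:ℝ)))) kk = 0 := by
    intro kk hkk
    by_cases h : kk ∈ region d nn km
    · exfalso
      apply hkk
      rw [hBigS, Finset.mem_filter]
      obtain ⟨h0, hl⟩ := h
      refine ⟨?_, h0, hl⟩
      rw [Fintype.mem_piFinset]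
      intro j
      rw [Fintype.mem_piFinset]
      exact hcomp (kk j) (h0 j) (hl j)
    · exact Set.indicator_of_notMem h _
  have hsingle : ∑ k ∈ Afin, japZ k ^ (-(2*α)) ≤ C / β * japZ km ^ β := by
    refine single_sum hd hβdef hβ0 hβ2 km Afin ?_
    intro k hk
    rw [hAfin, Finset.mem_filter] at hk
    exact hk.2
  have hSnn : (0:ℝ) ≤ ∑ k ∈ Afin, japZ k ^ (-(2*α)) :=
    Finset.sum_nonneg fun k _ => Real.rpow_nonneg (japZ_pos _).le _
  have hmain : (∑' kk : Fin nn → Fin d → ℤ,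
      (region d nn km).indicator
        (fun kk => (∏ j, japZ (kk j) ^ (-(2 * α))) * japZ km ^ (-(4/(m:ℝ)))) kk) ≤
      C ^ nn * (β ^ nn)⁻¹ := by
    rw [tsum_eq_sum hvanish]
    have hstep1 : ∀ kk ∈ BigS,
        (region d nn km).indicator
          (fun kk => (∏ j, japZ (kk j) ^ (-(2 * α))) * japZ km ^ (-(4/(m:ℝ)))) kk =
        (∏ j, japZ (kk j) ^ (-(2 * α))) * japZ km ^ (-(4/(m:ℝ))) := by
      intro kk hkk
      rw [hBigS, Finset.mem_filter] at hkk
      exact Set.indicator_of_mem hkk.2 _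
    rw [Finset.sum_congr rfl hstep1]
    have hsub : BigS ⊆ Fintype.piFinset (fun _ : Fin nn => Afin) := by
      intro kk hkk
      rw [hBigS, Finset.mem_filter] at hkk
      obtain ⟨hbox, h0, hl⟩ := hkk
      rw [Fintype.mem_piFinset]
      intro j
      rw [hAfin, Finset.mem_filter]
      refine ⟨?_, h0 j, hl j⟩
      rw [Fintype.mem_piFinset]
      exact hcomp (kk j) (h0 j) (hl j)
    calc ∑ kk ∈ BigS, (∏ j, japZ (kk j) ^ (-(2 * α))) * japZ km ^ (-(4/(m:ℝ)))
        ≤ ∑ kk ∈ Fintype.piFinset (fun _ : Fin nn => Afin),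
            (∏ j, japZ (kk j) ^ (-(2 * α))) * japZ km ^ (-(4/(m:ℝ))) :=
          Finset.sum_le_sum_of_subset_of_nonneg hsub (fun kk _ _ => hFnn kk)
      _ = (∑ k ∈ Afin, japZ k ^ (-(2*α))) ^ nn * japZ km ^ (-(4/(m:ℝ))) := by
          rw [← Finset.sum_mul]
          congr 1
          rw [Finset.sum_prod_piFinset Afin (fun (_ : Fin nn) k => japZ k ^ (-(2*α)))]
          rw [Finset.prod_const, Finset.card_univ, Fintype.card_fin]
      _ ≤ (C / β * japZ km ^ β) ^ nn * japZ km ^ (-(4/(m:ℝ))) := by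
          refine mul_le_mul_of_nonneg_right (pow_le_pow_left₀ hSnn hsingle nn) ?_
          exact Real.rpow_nonneg (japZ_pos _).le _
      _ = C ^ nn * (β ^ nn)⁻¹ * ((japZ km ^ β) ^ nn * japZ km ^ (-(4/(m:ℝ)))) := by
          rw [mul_pow, div_pow]
          ring
      _ ≤ C ^ nn * (β ^ nn)⁻¹ * 1 := by
          refine mul_le_mul_of_nonneg_left ?_ (by positivity)
          rw [← Real.rpow_natCast (japZ km ^ β) nn, ← Real.rpow_mul (japZ_pos km).le,
            ← Real.rpow_add (japZ_pos km)]
          refine Real.rpow_le_one_of_one_le_of_nonpos (one_le_japZ km) ?_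
          rw [hncast]
          have : β * ((m:ℝ)-1) = ((m:ℝ)-1)*β := by ring
          rw [this]
          linarith
      _ = C ^ nn * (β ^ nn)⁻¹ := mul_one _
  have hβr : β ^ (-((m:ℝ)-1)) = (β ^ nn)⁻¹ := by
    rw [← hncast, Real.rpow_neg hβ0.le, Real.rpow_natCast]
  constructor
  · have hE : ((m:ℝ)-1) * ((d:ℝ) - 2*((d:ℝ)/2 - 2/((m:ℝ)-1))) - 4 = 0 := by
      have h1 : (d:ℝ) - 2*((d:ℝ)/2 - 2/((m:ℝ)-1)) = 4/((m:ℝ)-1) := by ring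
      rw [h1]
      field_simp
      ring
    rw [hE, Real.rpow_zero, mul_one, hβr]
    exact hmain
  · rw [abs_of_pos hβ0, hβr]
    exact hmain
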